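/- Let L be a compact regular frame and P ⊆ L a basis of L closed under binary meets and binary joins. If a, b ∈ P and b ≺ a, then there exist p, q ∈ P with b ≤ p, p ≺ q and q ≺ a. -/

import Mathlib

/-- The well-inside relation of a frame: `b` is well inside `a` iff `bᶜ ⊔ a = ⊤`. -/
def WellInside {L : Type*} [Order.Frame L] (b a : L) : Prop := bᶜ ⊔ a = ⊤

/-- A frame is regular if every element is the join of the elements well inside it. -/
def IsRegularFrame (L : Type*) [Order.Frame L] : Prop :=
  ∀ a : L, a = sSup {b | WellInside b a}

/-- A frame is compact if `⊤` is a compact element. -/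
def IsCompactFrame (L : Type*) [Order.Frame L] : Prop :=
  ∀ S : Set L, ⊤ ≤ sSup S → ∃ T : Set L, T ⊆ S ∧ T.Finite ∧ ⊤ ≤ sSup T

/-- A subset `P` of a frame `L` is a basis if every element of `L` is the join
of the elements of `P` below it. -/
def IsBasis {L : Type*} [Order.Frame L] (P : Set L) : Prop :=
  ∀ a : L, a = sSup {p | p ∈ P ∧ p ≤ a}

/-- In a compact regular frame with a basis `P` closed under binary meets and
joins, the well-inside relation interpolates (twice) on `P`. -/
theorem compact_regular_basis_interpolation
    {L : Type*} [Order.Frame L] (hc : IsCompactFrame L) (hr : IsRegularFrame L)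
    (P : Set L) (hP : IsBasis P)
    (hmeet : ∀ x ∈ P, ∀ y ∈ P, x ⊓ y ∈ P) (hjoin : ∀ x ∈ P, ∀ y ∈ P, x ⊔ y ∈ P)
    (a b : L) (ha : a ∈ P) (hb : b ∈ P) (hba : WellInside b a) :
    ∃ p ∈ P, ∃ q ∈ P, b ≤ p ∧ WellInside p q ∧ WellInside q a := by
  classical
  set S : Set L := {p | p ∈ P ∧ WellInside p a} with hSdef
  set T : Set L := {p | p ∈ P ∧ p ≤ bᶜ} with hTdef
  -- a is the join of basis elements well inside a
  have haS : a ≤ sSup S := by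
    conv_lhs => rw [hr a]
    apply sSup_le
    intro x hx
    calc x = sSup {p | p ∈ P ∧ p ≤ x} := hP x
      _ ≤ sSup S := by
          apply sSup_le_sSup
          rintro p ⟨hpP, hpx⟩
          refine ⟨hpP, ?_⟩
          have h1 : xᶜ ⊔ a ≤ pᶜ ⊔ a := sup_le_sup_right (compl_le_compl hpx) a
          have := hx
          simp only [Set.mem_setOf_eq, WellInside] at this ⊢
          exact top_le_iff.mp (this ▸ h1)
  have hbT : (bᶜ : L) ≤ sSup T := le_of_eq (hP bᶜ)
  have htop : (⊤ : L) ≤ sSup (T ∪ S) := by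
    calc (⊤ : L) = bᶜ ⊔ a := hba.symm
      _ ≤ sSup T ⊔ sSup S := sup_le_sup hbT haS
      _ = sSup (T ∪ S) := (sSup_union).symm
  obtain ⟨F, hFsub, hFfin, hFtop⟩ := hc _ htop
  -- finite joins of elements of S, together with b, stay in P and well inside a
  have key : ∀ G : Set L, G.Finite → G ⊆ S →
      ∃ q, q ∈ P ∧ WellInside q a ∧ ∀ x ∈ G, x ≤ q := by
    intro G hG
    refine Set.Finite.induction_on
      (motive := fun G _ => G ⊆ S → ∃ q, q ∈ P ∧ WellInside q a ∧ ∀ x ∈ G, x ≤ q) G hG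
      (fun _ => ⟨b, hb, hba, by simp⟩) ?_
    intro x G' hxG hGfin ih hsub
    obtain ⟨q, hqP, hqa, hq⟩ := ih (fun y hy => hsub (Set.mem_insert_of_mem x hy))
    have hxS : x ∈ S := hsub (Set.mem_insert x G')
    refine ⟨x ⊔ q, hjoin x hxS.1 q hqP, ?_, ?_⟩
    · show (x ⊔ q)ᶜ ⊔ a = ⊤
      rw [compl_sup, sup_inf_right, hxS.2, hqa, inf_top_eq]
    · intro y hy
      rcases Set.mem_insert_iff.mp hy with h | h
      · exact h ▸ le_sup_left
      · exact (hq y h).trans le_sup_right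
  obtain ⟨q, hqP, hqa, hq⟩ := key (F ∩ S) (hFfin.inter_of_left S) Set.inter_subset_right
  refine ⟨b, hb, q, hqP, le_refl b, ?_, hqa⟩
  show bᶜ ⊔ q = ⊤
  refine top_le_iff.mp (hFtop.trans (sSup_le fun f hf => ?_))
  rcases hFsub hf with hT | hS
  · exact le_sup_of_le_left hT.2
  · exact le_sup_of_le_right (hq f ⟨hf, hS⟩)
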